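/- arXiv:2209.00091 — 4 statements merged into one kernel-verified Lean document; each statement's English description precedes it below -/
import Mathlib

section
/- Let G be a group and G₀ a normal solvable subgroup of finite index in G. Then every nilpotent normal subgroup N of G₀ is contained in the Fitting subgroup of G (the subgroup generated by all nilpotent normal subgroups of G). -/
/-- The Fitting subgroup of `G`: the subgroup generated by all nilpotent normal
subgroups of `G`. -/
def fittingSubgroup (G : Type*) [Group G] : Subgroup G :=
  sSup {N : Subgroup G | N.Normal ∧ Group.IsNilpotent N}


open Subgroup

namespace FittingAux

variable {L : Type*} [Group L]

/-- Ambient lower central series of a subgroup. -/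
def amb (A : Subgroup L) : ℕ → Subgroup L
  | 0 => A
  | n + 1 => ⁅amb A n, A⁆

lemma amb_normal (A : Subgroup L) [hA : A.Normal] : ∀ n, (amb A n).Normal
  | 0 => hA
  | n + 1 => by
    haveI := amb_normal A n
    exact Subgroup.commutator_normal _ _

lemma map_lcs (A : Subgroup L) (n : ℕ) :
    (Subgroup.lowerCentralSeries (⊤ : Subgroup A) n).map A.subtype = amb A n := by
  induction n with
  | zero =>
    show (⊤ : Subgroup A).map A.subtype = A
    rw [← MonoidHom.range_eq_map]
    exact A.range_subtype
  | succ n ih =>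
    show Subgroup.map A.subtype ⁅Subgroup.lowerCentralSeries (⊤ : Subgroup ↥A) n, (⊤ : Subgroup ↥A)⁆ = ⁅amb A n, A⁆
    rw [Subgroup.map_commutator, ih]
    congr 1
    rw [← MonoidHom.range_eq_map]
    exact A.range_subtype

lemma nilpotent_iff_amb (A : Subgroup L) :
    Group.IsNilpotent A ↔ ∃ n, amb A n = ⊥ := by
  rw [Subgroup.nilpotent_iff_lowerCentralSeries]
  refine exists_congr fun n => ?_
  rw [← map_lcs, Subgroup.map_eq_bot_iff_of_injective _ A.subtype_injective]

lemma amb_eq_bot_mono {A : Subgroup L} {c m : ℕ} (h : amb A c = ⊥) (hcm : c ≤ m) :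
    amb A m = ⊥ := by
  induction hcm with
  | refl => exact h
  | step hle ih =>
    show ⁅amb A _, A⁆ = ⊥
    rw [ih]
    exact Subgroup.commutator_bot_left A

lemma normal_iSup {ι : Sort*} (f : ι → Subgroup L) (hf : ∀ i, (f i).Normal) :
    (⨆ i, f i).Normal := by
  refine Subgroup.Normal.of_conjugate_fixed fun g => ?_
  show Subgroup.map (MulAut.conj g).toMonoidHom _ = _
  rw [Subgroup.map_iSup]
  congr 1
  funext i
  exact (hf i).conjAct (ConjAct.toConjAct g)

lemma commutator_iSup_left_le {ι : Sort*} (f : ι → Subgroup L) (K : Subgroup L)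
    (hf : ∀ i, (f i).Normal) (hK : K.Normal) :
    ⁅⨆ i, f i, K⁆ ≤ ⨆ i, ⁅f i, K⁆ := by
  set R : Subgroup L := ⨆ i, ⁅f i, K⁆ with hR
  haveI : R.Normal := normal_iSup _ fun i => by
    haveI := hf i; haveI := hK; exact Subgroup.commutator_normal _ _
  let π := QuotientGroup.mk' R
  have hbot : ∀ i, ⁅(f i).map π, K.map π⁆ = ⊥ := by
    intro i
    rw [← Subgroup.map_commutator, Subgroup.map_eq_bot_iff, QuotientGroup.ker_mk']
    exact le_iSup (fun i => ⁅f i, K⁆) i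
  have hcent : (⨆ i, f i).map π ≤ Subgroup.centralizer (K.map π) := by
    rw [Subgroup.map_iSup, iSup_le_iff]
    intro i
    exact Subgroup.commutator_eq_bot_iff_le_centralizer.mp (hbot i)
  have : ⁅(⨆ i, f i).map π, K.map π⁆ = ⊥ :=
    Subgroup.commutator_eq_bot_iff_le_centralizer.mpr hcent
  rw [← Subgroup.map_commutator, Subgroup.map_eq_bot_iff, QuotientGroup.ker_mk'] at this
  exact this

lemma commutator_sup_right_le {X H K : Subgroup L} (hX : X.Normal) (hH : H.Normal)
    (hK : K.Normal) : ⁅X, H ⊔ K⁆ ≤ ⁅X, H⁆ ⊔ ⁅X, K⁆ := by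
  have h1 : H ⊔ K = ⨆ b : Bool, (if b then H else K) := by
    rw [iSup_bool_eq]; simp
  have h2 : ⁅X, H ⊔ K⁆ ≤ ⁅H ⊔ K, X⁆ := Subgroup.commutator_comm_le _ _
  refine h2.trans ?_
  rw [h1]
  refine (commutator_iSup_left_le _ X (fun b => by cases b <;> simpa) hX).trans ?_
  rw [iSup_bool_eq]
  simp only [if_true, if_false]
  exact sup_le
    ((Subgroup.commutator_comm_le _ _).trans le_sup_left)
    ((Subgroup.commutator_comm_le _ _).trans le_sup_right)

end FittingAux

namespace FittingAux

variable {L : Type*} [Group L]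

/-- Bound `V` for mixed commutators with `p.1` entries from `H` and `p.2` from `K`. -/
def V (H K : Subgroup L) (p : ℕ × ℕ) : Subgroup L :=
  (if p.1 = 0 then ⊤ else amb H (p.1 - 1)) ⊓ (if p.2 = 0 then ⊤ else amb K (p.2 - 1))

lemma V_normal (H K : Subgroup L) (hH : H.Normal) (hK : K.Normal) (p : ℕ × ℕ) :
    (V H K p).Normal := by
  haveI := hH; haveI := hK
  haveI h1 : (if p.1 = 0 then (⊤ : Subgroup L) else amb H (p.1 - 1)).Normal := by
    split
    · infer_instance
    · exact amb_normal H _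
  haveI h2 : (if p.2 = 0 then (⊤ : Subgroup L) else amb K (p.2 - 1)).Normal := by
    split
    · infer_instance
    · exact amb_normal K _
  exact Subgroup.normal_inf_normal _ _

lemma commutator_V_left (H K : Subgroup L) (hH : H.Normal) (hK : K.Normal) (p : ℕ × ℕ) :
    ⁅V H K p, H⁆ ≤ V H K (p.1 + 1, p.2) := by
  haveI := hH; haveI := hK
  obtain ⟨i, j⟩ := p
  refine le_inf ?_ ?_
  · show ⁅V H K (i, j), H⁆ ≤ if i + 1 = 0 then ⊤ else amb H (i + 1 - 1)
    rw [if_neg (Nat.succ_ne_zero i), Nat.add_sub_cancel]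
    rcases Nat.eq_zero_or_pos i with h0 | hpos
    · subst h0
      exact (Subgroup.commutator_le_right _ _ : ⁅V H K (0, j), H⁆ ≤ H)
    · have hle : V H K (i, j) ≤ amb H (i - 1) := by
        refine inf_le_left.trans ?_
        rw [if_neg (Nat.pos_iff_ne_zero.mp hpos)]
      have h2 : ⁅V H K (i, j), H⁆ ≤ ⁅amb H (i - 1), H⁆ :=
        Subgroup.commutator_mono hle le_rfl
      have h3 : (⁅amb H (i - 1), H⁆ : Subgroup L) = amb H (i - 1 + 1) := rfl
      rw [h3, Nat.sub_add_cancel hpos] at h2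
      exact h2
  · show ⁅V H K (i, j), H⁆ ≤ if j = 0 then ⊤ else amb K (j - 1)
    by_cases hj : j = 0
    · rw [if_pos hj]; exact le_top
    · rw [if_neg hj]
      haveI := amb_normal K (j - 1)
      have hle : V H K (i, j) ≤ amb K (j - 1) := inf_le_right.trans (by rw [if_neg hj])
      exact (Subgroup.commutator_mono hle le_top).trans (Subgroup.commutator_le_left _ _)

lemma commutator_V_right (H K : Subgroup L) (hH : H.Normal) (hK : K.Normal) (p : ℕ × ℕ) :
    ⁅V H K p, K⁆ ≤ V H K (p.1, p.2 + 1) := by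
  have := commutator_V_left K H hK hH (p.2, p.1)
  have hcomm : V K H (p.2, p.1) = V H K p := by
    simp [V, inf_comm]
  have hcomm2 : V K H (p.2 + 1, p.1) = V H K (p.1, p.2 + 1) := by
    simp [V, inf_comm]
  rw [hcomm, hcomm2] at this
  exact this

lemma amb_sup_le (H K : Subgroup L) (hH : H.Normal) (hK : K.Normal) (n : ℕ) :
    amb (H ⊔ K) n ≤ ⨆ p : {p : ℕ × ℕ // p.1 + p.2 = n + 1}, V H K p.1 := by
  haveI := hH; haveI := hK
  induction n with
  | zero =>
    show H ⊔ K ≤ _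
    refine sup_le ?_ ?_
    · refine le_trans ?_ (le_iSup _ (⟨(1, 0), rfl⟩ : {p : ℕ × ℕ // p.1 + p.2 = 0 + 1}))
      simp [V, amb]
    · refine le_trans ?_ (le_iSup _ (⟨(0, 1), rfl⟩ : {p : ℕ × ℕ // p.1 + p.2 = 0 + 1}))
      simp [V, amb]
  | succ n ih =>
    show ⁅amb (H ⊔ K) n, H ⊔ K⁆ ≤ _
    have step1 : ⁅amb (H ⊔ K) n, H ⊔ K⁆ ≤
        ⁅⨆ p : {p : ℕ × ℕ // p.1 + p.2 = n + 1}, V H K p.1, H ⊔ K⁆ :=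
      Subgroup.commutator_mono ih le_rfl
    haveI : (⨆ p : {p : ℕ × ℕ // p.1 + p.2 = n + 1}, V H K p.1).Normal :=
      normal_iSup _ fun p => V_normal H K hH hK p.1
    have step2 : ⁅⨆ p : {p : ℕ × ℕ // p.1 + p.2 = n + 1}, V H K p.1, H ⊔ K⁆ ≤
        ⁅⨆ p : {p : ℕ × ℕ // p.1 + p.2 = n + 1}, V H K p.1, H⁆ ⊔
        ⁅⨆ p : {p : ℕ × ℕ // p.1 + p.2 = n + 1}, V H K p.1, K⁆ :=
      commutator_sup_right_le this hH hK
    refine step1.trans (step2.trans (sup_le ?_ ?_))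
    · refine le_trans (commutator_iSup_left_le _ H (fun p => V_normal H K hH hK p.1) hH) ?_
      refine iSup_le fun p => ?_
      refine le_trans (commutator_V_left H K hH hK p.1) ?_
      exact le_iSup (fun p : {p : ℕ × ℕ // p.1 + p.2 = n + 2} => V H K p.1)
        ⟨(p.1.1 + 1, p.1.2), by omega⟩
    · refine le_trans (commutator_iSup_left_le _ K (fun p => V_normal H K hH hK p.1) hK) ?_
      refine iSup_le fun p => ?_
      refine le_trans (commutator_V_right H K hH hK p.1) ?_
      exact le_iSup (fun p : {p : ℕ × ℕ // p.1 + p.2 = n + 2} => V H K p.1)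
        ⟨(p.1.1, p.1.2 + 1), by omega⟩

/-- Fitting's theorem for two normal nilpotent subgroups. -/
theorem fitting2 {H K : Subgroup L} (hH : H.Normal) (hK : K.Normal)
    (hHn : Group.IsNilpotent H) (hKn : Group.IsNilpotent K) :
    Group.IsNilpotent ↥(H ⊔ K) := by
  rw [nilpotent_iff_amb] at hHn hKn ⊢
  obtain ⟨c, hc⟩ := hHn
  obtain ⟨d, hd⟩ := hKn
  refine ⟨c + d, le_bot_iff.mp ?_⟩
  refine (amb_sup_le H K hH hK (c + d)).trans ?_
  refine iSup_le fun p => ?_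
  obtain ⟨⟨i, j⟩, hij⟩ := p
  simp only [V]
  rcases Nat.lt_or_ge i (c + 1) with hi | hi
  · have hj : j ≠ 0 ∧ d ≤ j - 1 := by omega
    rw [if_neg hj.1, amb_eq_bot_mono hd hj.2]
    simp
  · have hi' : i ≠ 0 ∧ c ≤ i - 1 := by omega
    rw [if_neg hi'.1, amb_eq_bot_mono hc hi'.2]
    simp

end FittingAux

namespace FittingAux

variable {L : Type*} [Group L]

theorem fitting_finset {ι : Type*} (s : Finset ι) (f : ι → Subgroup L)
    (hn : ∀ i, (f i).Normal) (hnil : ∀ i, Group.IsNilpotent (f i)) :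
    Group.IsNilpotent ↥(⨆ i ∈ s, f i) := by
  classical
  induction s using Finset.induction_on with
  | empty =>
    have he : (⨆ i ∈ (∅ : Finset ι), f i) = ⊥ := by simp
    rw [he]
    exact Group.isNilpotent_of_subsingleton
  | insert a t ha ih =>
    rw [Finset.iSup_insert]
    refine fitting2 (hn a) ?_ (hnil a) ih
    exact normal_iSup _ fun i => normal_iSup _ fun _ => hn i

theorem fitting_fintype {ι : Type*} [Fintype ι] (f : ι → Subgroup L)
    (hn : ∀ i, (f i).Normal) (hnil : ∀ i, Group.IsNilpotent (f i)) :
    Group.IsNilpotent ↥(⨆ i, f i) := by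
  have h := fitting_finset Finset.univ f hn hnil
  have he : (⨆ i ∈ (Finset.univ : Finset ι), f i) = ⨆ i, f i := by
    simp
  rwa [he] at h

end FittingAux

open Pointwise


/-- If `G₀` is a normal solvable subgroup of finite index in `G`, then every nilpotent
normal subgroup `N` of `G₀` is contained in the Fitting subgroup of `G`. -/
theorem nilpotent_normal_of_finiteIndex_solvable_le_fitting
    {G : Type*} [Group G] (G₀ : Subgroup G) (hnorm : G₀.Normal)
    (hfin : G₀.FiniteIndex) (hsolv : IsSolvable G₀)
    (N : Subgroup G₀) (hNnorm : N.Normal) (hNnil : Group.IsNilpotent N) :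
    N.map G₀.subtype ≤ fittingSubgroup G := by
  classical
  haveI := hnorm
  haveI := hfin
  set N₀ : Subgroup G := N.map G₀.subtype with hN₀def
  have hN₀le : N₀ ≤ G₀ := by
    rintro x ⟨m, _, rfl⟩
    exact m.2
  haveI hN₀nil : Group.IsNilpotent ↥N₀ := by
    haveI := hNnil
    exact nilpotent_of_mulEquiv (Subgroup.equivMapOfInjective N G₀.subtype G₀.subtype_injective)
  -- conjugation by elements of G₀ fixes N₀
  have hconj_le : ∀ g ∈ G₀, MulAut.conj g • N₀ ≤ N₀ := by
    intro g hg x hx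
    rw [Subgroup.mem_smul_pointwise_iff_exists] at hx
    obtain ⟨m, hm, rfl⟩ := hx
    obtain ⟨n, hn, rfl⟩ := hm
    refine Subgroup.mem_map.mpr ⟨⟨g, hg⟩ * n * ⟨g, hg⟩⁻¹, hNnorm.conj_mem n hn ⟨g, hg⟩, ?_⟩
    simp [MulAut.smul_def]
  have hconj_eq : ∀ g ∈ G₀, MulAut.conj g • N₀ = N₀ := by
    intro g hg
    refine le_antisymm (hconj_le g hg) ?_
    have h2 : MulAut.conj g⁻¹ • N₀ ≤ N₀ := hconj_le g⁻¹ (inv_mem hg)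
    have h3 : MulAut.conj g • MulAut.conj g⁻¹ • N₀ ≤ MulAut.conj g • N₀ :=
      Subgroup.pointwise_smul_le_pointwise_smul_iff.mpr h2
    rwa [map_inv, smul_inv_smul] at h3
  -- reduce conjugation to a representative of the coset
  have key : ∀ g : G,
      MulAut.conj g • N₀ = MulAut.conj (Quotient.out (QuotientGroup.mk g : G ⧸ G₀)) • N₀ := by
    intro g
    set o := Quotient.out (QuotientGroup.mk g : G ⧸ G₀) with ho
    have hmk : (QuotientGroup.mk o : G ⧸ G₀) = QuotientGroup.mk g := Quotient.out_eq _
    have hmem : o⁻¹ * g ∈ G₀ := (QuotientGroup.eq).mp hmk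
    have hg : g = o * (o⁻¹ * g) := by group
    calc MulAut.conj g • N₀ = MulAut.conj (o * (o⁻¹ * g)) • N₀ := by rw [← hg]
    _ = MulAut.conj o • MulAut.conj (o⁻¹ * g) • N₀ := by rw [map_mul, mul_smul]
    _ = MulAut.conj o • N₀ := by rw [hconj_eq _ hmem]
  set C : G ⧸ G₀ → Subgroup G := fun q => MulAut.conj (Quotient.out q) • N₀ with hCdef
  set M : Subgroup G := ⨆ q, C q with hMdef
  have hkeyC : ∀ g : G, MulAut.conj g • N₀ = C (QuotientGroup.mk g) := fun g => key g
  have hN₀M : N₀ ≤ M := by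
    have h1 : N₀ = MulAut.conj (1 : G) • N₀ := by
      rw [map_one, one_smul]
    rw [h1, hkeyC]
    exact le_iSup C _
  have hCle : ∀ q, C q ≤ G₀ := by
    intro q
    have : MulAut.conj (Quotient.out q) • N₀ ≤ MulAut.conj (Quotient.out q) • G₀ :=
      Subgroup.pointwise_smul_le_pointwise_smul_iff.mpr hN₀le
    rwa [Subgroup.Normal.conj_smul_eq_self _ G₀] at this
  have hCconj : ∀ q, ∀ x ∈ G₀, MulAut.conj x • C q = C q := by
    intro q x hx
    set o := Quotient.out q with ho
    have hxo : x * o = o * (o⁻¹ * x * o) := by group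
    have hmem : o⁻¹ * x * o ∈ G₀ := by
      have := hnorm.conj_mem x hx o⁻¹
      simpa [mul_assoc] using this
    show MulAut.conj x • MulAut.conj o • N₀ = MulAut.conj o • N₀
    rw [← mul_smul, ← map_mul, hxo, map_mul, mul_smul, hconj_eq _ hmem]
  have hMnormal : M.Normal := by
    refine Subgroup.Normal.of_conjugate_fixed fun g => ?_
    have hsmul : MulAut.conj g • M = ⨆ q, MulAut.conj g • C q := by
      rw [hMdef]
      show Subgroup.map (MulAut.conj g).toMonoidHom _ = _
      rw [Subgroup.map_iSup]
      rfl
    refine le_antisymm ?_ ?_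
    · rw [hsmul]
      refine iSup_le fun q => ?_
      have : MulAut.conj g • C q = C (QuotientGroup.mk (g * Quotient.out q)) := by
        rw [← hkeyC]
        show MulAut.conj g • MulAut.conj (Quotient.out q) • N₀ = _
        rw [← mul_smul, ← map_mul]
      rw [this]
      exact le_iSup C _
    · refine iSup_le fun q => ?_
      have h1 : C q = MulAut.conj g • C (QuotientGroup.mk (g⁻¹ * Quotient.out q)) := by
        rw [← hkeyC]
        show MulAut.conj (Quotient.out q) • N₀ = _
        rw [← mul_smul, ← map_mul]
        congr 2
        group
      rw [h1]
      exact Subgroup.pointwise_smul_le_pointwise_smul_iff.mpr (le_iSup C _)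
  haveI hCnil : ∀ q, Group.IsNilpotent ↥(C q) := fun q =>
    nilpotent_of_mulEquiv (Subgroup.equivSMul (MulAut.conj (Quotient.out q)) N₀)
  set D : G ⧸ G₀ → Subgroup ↥G₀ := fun q => (C q).subgroupOf G₀ with hDdef
  have hDnormal : ∀ q, (D q).Normal := by
    intro q
    constructor
    intro n hn g
    rw [Subgroup.mem_subgroupOf] at hn ⊢
    rw [← hCconj q g.1 g.2]
    have hcoe : ((g * n * g⁻¹ : ↥G₀) : G) = MulAut.conj (g : G) • (n : G) := by
      simp [MulAut.smul_def]
    rw [hcoe]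
    exact Subgroup.smul_mem_pointwise_smul _ _ _ hn
  have hDnil : ∀ q, Group.IsNilpotent ↥(D q) := by
    intro q
    haveI := hCnil q
    exact nilpotent_of_mulEquiv (Subgroup.subgroupOfEquivOfLe (hCle q)).symm
  haveI : Finite (G ⧸ G₀) := G₀.finite_quotient_of_finiteIndex
  haveI : Fintype (G ⧸ G₀) := Fintype.ofFinite _
  have hsupnil : Group.IsNilpotent ↥(⨆ q, D q) :=
    FittingAux.fitting_fintype D hDnormal hDnil
  have hmap : (⨆ q, D q).map G₀.subtype = M := by
    rw [Subgroup.map_iSup]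
    refine le_antisymm (iSup_le fun q => ?_) (iSup_le fun q => ?_)
    · rw [hDdef]
      show ((C q).subgroupOf G₀).map G₀.subtype ≤ M
      rw [Subgroup.subgroupOf_map_subtype, inf_eq_left.mpr (hCle q)]
      exact le_iSup C q
    · refine le_trans ?_ (le_iSup (fun q => (D q).map G₀.subtype) q)
      rw [hDdef]
      show C q ≤ ((C q).subgroupOf G₀).map G₀.subtype
      rw [Subgroup.subgroupOf_map_subtype, inf_eq_left.mpr (hCle q)]
  have hMnil : Group.IsNilpotent ↥M := by
    haveI := hsupnil
    have e := Subgroup.equivMapOfInjective (⨆ q, D q) G₀.subtype G₀.subtype_injective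
    rw [hmap] at e
    exact nilpotent_of_mulEquiv e
  refine le_trans hN₀M (le_sSup ?_)
  exact ⟨hMnormal, hMnil⟩
end

section
/- Let N be a group of elliptic automorphisms of a directed tree (𝕋, ⊴). Then the quotient relation on 𝕋 defined by x ⊴ y iff there exist v in the N-orbit of x and w in the N-orbit of y with v ⊴ w, is a partial order on the set of N-orbits 𝕋/N. -/
/-- A directed tree: a poset in which every up-set `{u | v ⊴ u}` is totally ordered and
order-isomorphic to `[0, ∞)`, every pair of points has a smallest common upper bound, and
there is a countable subset order-dense in every segment. -/
structure IsDirectedTree (T : Type*) [PartialOrder T] : Prop where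
  ray_iso : ∀ v : T, Nonempty ({u : T // v ≤ u} ≃o {x : ℝ // 0 ≤ x})
  lub : ∀ u v : T, ∃ w : T, u ≤ w ∧ v ≤ w ∧ ∀ z : T, u ≤ z → v ≤ z → w ≤ z
  countable_dense : ∃ S : Set T, S.Countable ∧ ∀ u v : T, u < v → ∃ z ∈ S, u ≤ z ∧ z ≤ v

/-- The quotient relation on `𝕋/N` induced by `⊴`: `x ⊴ y` iff some element of the
`N`-orbit of `x` is `⊴` some element of the `N`-orbit of `y`. -/
def QRel {T : Type*} [PartialOrder T] (N : Subgroup (T ≃o T)) (x y : T) : Prop :=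
  ∃ g ∈ N, ∃ h ∈ N, g x ≤ h y

/-- Let `N` be a group of elliptic automorphisms of a directed tree `(𝕋, ⊴)`. Then the
quotient relation on `𝕋/N` (`x ⊴ y` iff representatives of the orbits are comparable) is
a partial order on the set of `N`-orbits: it is reflexive, transitive, and antisymmetric
modulo `N`-orbits. -/
theorem quotient_relation_partialOrder_of_elliptic
    {T : Type*} [PartialOrder T] (hT : IsDirectedTree T)
    (N : Subgroup (T ≃o T))
    (hell : ∀ g ∈ N, ∀ v : T, g v ≤ v → g v = v) :
    (∀ x : T, QRel N x x) ∧
    (∀ x y z : T, QRel N x y → QRel N y z → QRel N x z) ∧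
    (∀ x y : T, QRel N x y → QRel N y x → ∃ g ∈ N, g x = y) := by
  refine ⟨fun x => ⟨1, one_mem N, 1, one_mem N, le_refl _⟩, ?_, ?_⟩
  · rintro x y z ⟨g, hg, h, hh, hxy⟩ ⟨g', hg', h', hh', hyz⟩
    refine ⟨g' * h⁻¹ * g, mul_mem (mul_mem hg' (inv_mem hh)) hg, h', hh', ?_⟩
    have e1 : g' (h.symm (g x)) ≤ g' (h.symm (h y)) :=
      (OrderIso.le_iff_le g').mpr ((OrderIso.le_iff_le h.symm).mpr hxy)
    have e2 : g' (h.symm (h y)) = g' y := congrArg _ (h.symm_apply_apply y)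
    exact le_trans (le_of_le_of_eq e1 e2) hyz
  · rintro x y ⟨g, hg, h, hh, hxy⟩ ⟨g', hg', h', hh', hyx⟩
    set k : T ≃o T := h⁻¹ * g with hk
    have hkN : k ∈ N := mul_mem (inv_mem hh) hg
    set m : T ≃o T := h'⁻¹ * g' with hm
    have hmN : m ∈ N := mul_mem (inv_mem hh') hg'
    have h1 : k x ≤ y := by
      show h.symm (g x) ≤ y
      exact (OrderIso.symm_apply_le h).mpr hxy
    have h2 : m y ≤ x := by
      show h'.symm (g' y) ≤ x
      exact (OrderIso.symm_apply_le h').mpr hyx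
    have h3 : (m * k) x ≤ x :=
      le_trans ((OrderIso.le_iff_le m).mpr h1) h2
    have h4 : m (k x) = x := hell _ (mul_mem hmN hkN) x h3
    have h5 : y ≤ k x := (OrderIso.le_iff_le m).mp (le_of_le_of_eq h2 h4.symm)
    exact ⟨k, hkN, le_antisymm h1 h5⟩
end

section
/- Let (𝕋, ⊴) be a directed tree and let N be a group of elliptic automorphisms of 𝕋. Fix v ∈ 𝕋 and let x denote the N-orbit of v. Then the quotient projection π : 𝕋 → 𝕋/N restricts to an order-isomorphism from the ray [v, ∞) = {w : v ⊴ w} onto the up-set {y ∈ 𝕋/N : x ⊴ y}, where 𝕋/N carries the quotient order (x₁ ⊴ x₂ iff some representatives are comparable). -/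
/-- Let `N` be a group of elliptic automorphisms of a directed tree `(𝕋, ⊴)` and fix
`v ∈ 𝕋`. The quotient projection `π : 𝕋 → 𝕋/N` restricts to an order-isomorphism from the
ray `[v, ∞) = {w | v ⊴ w}` onto the up-set of the orbit of `v` in `𝕋/N`: it is injective
on the ray, its image is the whole up-set, and it preserves and reflects the order. -/
theorem quotient_projection_ray_orderIso_of_elliptic
    {T : Type*} [PartialOrder T] (hT : IsDirectedTree T)
    (N : Subgroup (T ≃o T))
    (hell : ∀ g ∈ N, ∀ v : T, g v ≤ v → g v = v) (v : T) :
    (∀ w₁ w₂ : T, v ≤ w₁ → v ≤ w₂ → (∃ g ∈ N, g w₁ = w₂) → w₁ = w₂) ∧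
    (∀ u : T, QRel N v u → ∃ w : T, v ≤ w ∧ ∃ g ∈ N, g u = w) ∧
    (∀ w₁ w₂ : T, v ≤ w₁ → v ≤ w₂ → (w₁ ≤ w₂ ↔ QRel N w₁ w₂)) := by

  -- the ray above `v` is totally ordered
  have lin : ∀ a b : T, v ≤ a → v ≤ b → a ≤ b ∨ b ≤ a := by
    intro a b ha hb
    obtain ⟨e⟩ := hT.ray_iso v
    rcases le_total (e ⟨a, ha⟩) (e ⟨b, hb⟩) with h | h
    · exact Or.inl (e.le_iff_le.mp h)
    · exact Or.inr (e.le_iff_le.mp h)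
  -- ellipticity works in both directions
  have ell : ∀ g : T ≃o T, g ∈ N → ∀ w : T, w ≤ g w ∨ g w ≤ w → g w = w := by
    intro g hg w h
    rcases h with h | h
    · have h2 : g⁻¹ (g w) ≤ g w := by
        have : (g⁻¹ : T ≃o T) (g w) = w := g.symm_apply_apply w
        rw [this]; exact h
      have h3 := hell g⁻¹ (inv_mem hg) (g w) h2
      have h4 : (g⁻¹ : T ≃o T) (g w) = w := g.symm_apply_apply w
      rw [h4] at h3
      exact h3.symm
    · exact hell g hg w h
  refine ⟨?_, ?_, ?_⟩
  · rintro w₁ w₂ h1 h2 ⟨g, hg, hgw⟩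
    rcases lin w₁ w₂ h1 h2 with h | h
    · have : g w₁ = w₁ := ell g hg w₁ (Or.inl (hgw ▸ h))
      rw [← hgw, this]
    · have : g w₁ = w₁ := ell g hg w₁ (Or.inr (hgw ▸ h))
      rw [← hgw, this]
  · rintro u ⟨g, hg, h, hh, hle⟩
    refine ⟨(g⁻¹ * h : T ≃o T) u, ?_, g⁻¹ * h, mul_mem (inv_mem hg) hh, rfl⟩
    have h1 : (g⁻¹ : T ≃o T) (g v) ≤ (g⁻¹ : T ≃o T) (h u) := (g⁻¹ : T ≃o T).monotone hle
    have h2 : (g⁻¹ : T ≃o T) (g v) = v := g.symm_apply_apply v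
    have h3 : (g⁻¹ * h : T ≃o T) u = (g⁻¹ : T ≃o T) (h u) := rfl
    rw [h2] at h1; rw [h3]; exact h1
  · intro w₁ w₂ h1 h2
    constructor
    · intro h
      exact ⟨1, one_mem N, 1, one_mem N, h⟩
    · rintro ⟨g, hg, h, hh, hle⟩
      have key : (h⁻¹ * g : T ≃o T) w₁ ≤ w₂ := by
        have k1 : (h⁻¹ : T ≃o T) (g w₁) ≤ (h⁻¹ : T ≃o T) (h w₂) := (h⁻¹ : T ≃o T).monotone hle
        have k2 : (h⁻¹ : T ≃o T) (h w₂) = w₂ := h.symm_apply_apply w₂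
        rw [k2] at k1; exact k1
      rcases lin w₁ w₂ h1 h2 with hc | hc
      · exact hc
      · have : (h⁻¹ * g : T ≃o T) w₁ = w₁ :=
          ell (h⁻¹ * g) (mul_mem (inv_mem hh) hg) w₁ (Or.inr (key.trans hc))
        rw [← this]; exact key
end

section
/- Let φ : G → Homeo₊(ℝ) be a faithful minimal action of a group G, and let a, s ∈ G be such that: s has at least one fixed point under φ, the fixed point set of φ(a) is disjoint from the fixed point set of φ(s), and the conjugates sⁿ a s⁻ⁿ (n ∈ ℤ) pairwise commute. Then there is a well-defined group homomorphism ρ : ℤ ≀ ℤ → G sending the standard generators h₀ ↦ a and g ↦ s, and the subgroup ⟨a, s⟩ acts on ℝ without global fixed points. -/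
/-! The lamplighter group `ℤ ≀ ℤ = (⊕_ℤ ℤ) ⋊ ℤ`. -/

/-- The base group `L = ⊕_ℤ ℤ` of finitely supported configurations `ℤ → ℤ`,
written multiplicatively. -/
abbrev LampBase := Multiplicative (ℤ →₀ ℤ)

/-- The shift of configurations by `n`. -/
noncomputable def shiftEquiv (n : ℤ) : LampBase ≃* LampBase :=
  AddEquiv.toMultiplicative (Finsupp.domCongr (M := ℤ) (Equiv.addRight n))

/-- The shift action of `ℤ` on `L = ⊕_ℤ ℤ`. -/
noncomputable def lampShift : Multiplicative ℤ →* MulAut LampBase where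
  toFun n := shiftEquiv n.toAdd
  map_one' := by
    refine MulEquiv.ext fun f => Multiplicative.toAdd.injective ?_
    refine Finsupp.ext fun k => ?_
    simp [shiftEquiv, Finsupp.domCongr_apply, Finsupp.equivMapDomain_apply]
    rfl
  map_mul' m n := by
    refine MulEquiv.ext fun f => Multiplicative.toAdd.injective ?_
    refine Finsupp.ext fun k => ?_
    simp [shiftEquiv, Finsupp.domCongr_apply, Finsupp.equivMapDomain_apply, MulAut.mul_def]
    congr 1
    simp [Equiv.Perm.mul_def, Equiv.symm_trans_apply]
    ring

/-- The lamplighter group `ℤ ≀ ℤ = (⊕_ℤ ℤ) ⋊ ℤ`. -/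
noncomputable abbrev Lamplighter := LampBase ⋊[lampShift] Multiplicative ℤ

/-- The standard generator `h₀` of `ℤ ≀ ℤ` (the configuration `δ₀`). -/
noncomputable def lampH₀ : Lamplighter :=
  SemidirectProduct.inl (Multiplicative.ofAdd (Finsupp.single 0 1))

/-- The standard generator `g` of `ℤ ≀ ℤ` (the shift). -/
noncomputable def lampG : Lamplighter :=
  SemidirectProduct.inr (Multiplicative.ofAdd 1)

section
variable {G : Type*} [Group G]

theorem exists_lamp_aux (a s : G)
    (hcomm : ∀ n m : ℤ, Commute (s ^ n * a * s ^ (-n)) (s ^ m * a * s ^ (-m))) :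
    ∃ ρ : Lamplighter →* G, ρ lampH₀ = a ∧ ρ lampG = s := by
  classical
  set c : ℤ → G := fun n => s ^ n * a * s ^ (-n) with hc
  set K : Set G := Set.range c with hK
  have hKcomm : ∀ x ∈ K, ∀ y ∈ K, x * y = y * x := by
    rintro x ⟨n, rfl⟩ y ⟨m, rfl⟩
    exact hcomm n m
  letI : CommGroup (Subgroup.closure K) := Subgroup.closureCommGroupOfComm hKcomm
  set cH : ℤ → Subgroup.closure K := fun n =>
    ⟨c n, Subgroup.subset_closure ⟨n, rfl⟩⟩ with hcH
  let f₀ : (ℤ →₀ ℤ) →+ Additive (Subgroup.closure K) :=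
    Finsupp.liftAddHom fun n => zmultiplesHom _ (Additive.ofMul (cH n))
  let f₁ : LampBase →* G :=
    ((Subgroup.closure K).subtype.comp
      (MulEquiv.multiplicativeAdditive _).toMonoidHom).comp
      (AddMonoidHom.toMultiplicative f₀)
  have hf₁ : ∀ (n k : ℤ), f₁ (Multiplicative.ofAdd (Finsupp.single n k)) = (c n) ^ k := by
    intro n k
    have h1 : f₀ (Finsupp.single n k) = k • Additive.ofMul (cH n) :=
      Finsupp.liftAddHom_apply_single _ n k
    show ((Subgroup.closure K).subtype)
      ((MulEquiv.multiplicativeAdditive _)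
        (AddMonoidHom.toMultiplicative f₀ (Multiplicative.ofAdd (Finsupp.single n k)))) = c n ^ k
    have h2 : AddMonoidHom.toMultiplicative f₀ (Multiplicative.ofAdd (Finsupp.single n k))
        = Multiplicative.ofAdd (k • Additive.ofMul (cH n)) := by
      show Multiplicative.ofAdd (f₀ (Finsupp.single n k)) = _
      rw [h1]
    rw [h2]
    show (((k • Additive.ofMul (cH n)).toMul : Subgroup.closure K) : G) = c n ^ k
    rw [toMul_zsmul, toMul_ofMul]
    push_cast [cH]
    rfl
  have hshift : ∀ (n : ℤ) (x y : ℤ),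
      shiftEquiv n (Multiplicative.ofAdd (Finsupp.single x y)) =
        Multiplicative.ofAdd (Finsupp.single (x + n) y) := by
    intro n x y
    show Multiplicative.ofAdd
        (Finsupp.equivMapDomain (Equiv.addRight n) (Finsupp.single x y)) = _
    rw [Finsupp.equivMapDomain_single]
    rfl
  have hconj : ∀ (n x : ℤ), c (x + n) = s ^ n * c x * s ^ (-n) := by
    intro n x
    simp only [hc, zpow_add, zpow_neg]
    group
  have key : ∀ (n : ℤ) (f : ℤ →₀ ℤ),
      f₁ (shiftEquiv n (Multiplicative.ofAdd f)) =
        s ^ n * f₁ (Multiplicative.ofAdd f) * s ^ (-n) := by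
    intro n f
    induction f using Finsupp.induction with
    | zero =>
      show f₁ (shiftEquiv n 1) = s ^ n * f₁ 1 * s ^ (-n)
      simp only [map_one]
      group
    | single_add x y f _ _ ih =>
      have hsplit : Multiplicative.ofAdd (Finsupp.single x y + f) =
          Multiplicative.ofAdd (Finsupp.single x y) * Multiplicative.ofAdd f := rfl
      rw [hsplit, map_mul, map_mul, map_mul, hshift, hf₁, ih, hf₁, hconj]
      rw [zpow_neg, conj_zpow]
      group
  have hcompat : ∀ g : Multiplicative ℤ,
      f₁.comp (lampShift g).toMonoidHom =
        (MulAut.conj (zpowersHom G s g)).toMonoidHom.comp f₁ := by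
    intro g
    refine MonoidHom.ext fun p => ?_
    show f₁ (shiftEquiv g.toAdd (Multiplicative.ofAdd p.toAdd)) =
      MulAut.conj (s ^ g.toAdd) (f₁ (Multiplicative.ofAdd p.toAdd))
    rw [key, zpow_neg, MulAut.conj_apply]
  refine ⟨SemidirectProduct.lift f₁ (zpowersHom G s) hcompat, ?_, ?_⟩
  · show SemidirectProduct.lift f₁ (zpowersHom G s) hcompat
        (SemidirectProduct.inl (Multiplicative.ofAdd (Finsupp.single 0 1))) = a
    rw [SemidirectProduct.lift_inl, hf₁]
    simp [hc]
  · show SemidirectProduct.lift f₁ (zpowersHom G s) hcompat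
        (SemidirectProduct.inr (Multiplicative.ofAdd 1)) = s
    rw [SemidirectProduct.lift_inr]
    simp
end

/-- Let `φ` be a faithful minimal action of a group `G` on `ℝ` by orientation-preserving
homeomorphisms (modelled as order-isomorphisms of `ℝ`), and let `a, s ∈ G` be such that
`φ(s)` has at least one fixed point, the fixed point sets of `φ(a)` and `φ(s)` are
disjoint, and the conjugates `sⁿ a s⁻ⁿ` (`n ∈ ℤ`) pairwise commute. Then there is a
well-defined homomorphism `ρ : ℤ ≀ ℤ → G` with `ρ(h₀) = a` and `ρ(g) = s`, and the
subgroup `⟨a, s⟩` acts on `ℝ` without global fixed points. -/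
theorem lamplighter_hom_of_commuting_conjugates
    {G : Type*} [Group G] (φ : G →* (ℝ ≃o ℝ))
    (hfaith : Function.Injective φ)
    (hmin : ∀ x : ℝ, Dense (Set.range fun g : G => φ g x))
    (a s : G)
    (hs : ∃ x : ℝ, φ s x = x)
    (hdisj : ∀ x : ℝ, φ a x = x → φ s x ≠ x)
    (hcomm : ∀ n m : ℤ, Commute (s ^ n * a * s ^ (-n)) (s ^ m * a * s ^ (-m))) :
    (∃ ρ : Lamplighter →* G, ρ lampH₀ = a ∧ ρ lampG = s) ∧
    ¬∃ x : ℝ, ∀ w ∈ Subgroup.closure {a, s}, φ w x = x := by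
  constructor
  · exact exists_lamp_aux a s hcomm
  · rintro ⟨x, hx⟩
    exact hdisj x
      (hx a (Subgroup.subset_closure (Set.mem_insert a {s})))
      (hx s (Subgroup.subset_closure (Set.mem_insert_of_mem a rfl)))
end
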